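/- Let φ be a CNF formula in which every variable occurs at most twice, with no empty clauses. Let G(φ) be the multigraph whose vertices are the clauses of φ, with one edge {C, C'} for every variable x occurring positively in C and negatively in C', and let a clause be tagged if it contains a pure literal (a literal whose variable does not occur with the opposite sign anywhere in φ). If k is the number of connected components of G(φ) that are trees containing no tagged vertex, then the maximum number of clauses of φ simultaneously satisfiable by one assignment is exactly m − k, where m is the number of clauses of φ. -/

import Mathlib

/-- Reachability between clauses (indexed by `Fin m`) in the tagged graph `G(φ)`:
two clauses are adjacent iff some variable occurs positively in one and negatively
in the other. -/
def ClauseReach (m : ℕ) (φ : Fin m → Finset (ℕ × Bool)) : Fin m → Fin m → Prop :=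
  Relation.ReflTransGen (fun i j => ∃ x : ℕ,
    ((x, true) ∈ φ i ∧ (x, false) ∈ φ j) ∨ ((x, true) ∈ φ j ∧ (x, false) ∈ φ i))

/-- A clause is tagged iff it contains a pure literal, i.e. a literal whose
complement occurs in no clause. -/
def Tagged (m : ℕ) (φ : Fin m → Finset (ℕ × Bool)) (i : Fin m) : Prop :=
  ∃ l ∈ φ i, ∀ j : Fin m, (l.1, !l.2) ∉ φ j

namespace CNF2Aux

open Classical

variable {m : ℕ} (φ : Fin m → Finset (ℕ × Bool))

def stepR (i j : Fin m) : Prop := ∃ x : ℕ,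
    ((x, true) ∈ φ i ∧ (x, false) ∈ φ j) ∨ ((x, true) ∈ φ j ∧ (x, false) ∈ φ i)

lemma reach_eq : ClauseReach m φ = Relation.ReflTransGen (stepR φ) := rfl

def comp (i : Fin m) : Set (Fin m) := {j | ClauseReach m φ i j}

def ES (K : Set (Fin m)) : Set ℕ :=
  {x : ℕ | ∃ i' j' : Fin m, i' ∈ K ∧ (x, true) ∈ φ i' ∧ (x, false) ∈ φ j'}

def Bad : Set (Set (Fin m)) :=
  {K | ∃ i : Fin m, K = comp φ i ∧ (∀ j ∈ K, ¬ Tagged m φ j) ∧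
    (ES φ K).ncard + 1 = K.ncard}

noncomputable def Nv (i : Fin m) : Finset ℕ :=
  ((φ i).filter (fun l => ∃ j, (l.1, !l.2) ∈ φ j)).image Prod.fst

lemma mem_Nv {x : ℕ} {i : Fin m} :
    x ∈ Nv φ i ↔ ∃ b : Bool, (x, b) ∈ φ i ∧ ∃ j, (x, !b) ∈ φ j := by
  simp only [Nv, Finset.mem_image, Finset.mem_filter]
  constructor
  · rintro ⟨⟨y, b⟩, ⟨hb, j, hj⟩, rfl⟩; exact ⟨b, hb, j, hj⟩
  · rintro ⟨b, hb, j, hj⟩; exact ⟨(x, b), ⟨hb, j, hj⟩, rfl⟩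

lemma stepR_symm {i j : Fin m} (h : stepR φ i j) : stepR φ j i := by
  obtain ⟨x, h⟩ := h; exact ⟨x, h.symm⟩

lemma reach_symm {i j : Fin m} (h : ClauseReach m φ i j) : ClauseReach m φ j i :=
  by haveI : Std.Symm (stepR φ) := ⟨fun _ _ h => stepR_symm φ h⟩
     exact (Relation.ReflTransGen.stdSymm : Std.Symm (Relation.ReflTransGen (stepR φ))).symm _ _ h

lemma mem_comp_self (i : Fin m) : i ∈ comp φ i := Relation.ReflTransGen.refl

lemma comp_eq_of_mem {i j : Fin m} (h : j ∈ comp φ i) : comp φ i = comp φ j := by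
  ext l
  exact ⟨fun hl => Relation.ReflTransGen.trans (reach_symm φ h) hl,
    fun hl => Relation.ReflTransGen.trans h hl⟩

lemma mem_comp_step {i j l : Fin m} (hj : j ∈ comp φ i) (h : stepR φ j l) :
    l ∈ comp φ i := Relation.ReflTransGen.tail hj h

lemma occ_three (hocc : ∀ x : ℕ, ((Finset.univ : Finset (Fin m × Bool)).filter
      (fun p => (x, p.2) ∈ φ p.1)).card ≤ 2)
    {x : ℕ} {p q r : Fin m × Bool}
    (hp : (x, p.2) ∈ φ p.1) (hq : (x, q.2) ∈ φ q.1) (hr : (x, r.2) ∈ φ r.1)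
    (hpq : p ≠ q) (hpr : p ≠ r) (hqr : q ≠ r) : False := by
  have hsub : ({p, q, r} : Finset (Fin m × Bool)) ⊆
      (Finset.univ.filter (fun p => (x, p.2) ∈ φ p.1)) := by
    intro a ha
    simp only [Finset.mem_insert, Finset.mem_singleton] at ha
    rcases ha with rfl | rfl | rfl <;> simp [hp, hq, hr]
  have h3 : ({p, q, r} : Finset (Fin m × Bool)).card = 3 := by
    rw [Finset.card_insert_of_notMem (by simp [hpq, hpr]),
      Finset.card_insert_of_notMem (by simp [hqr]), Finset.card_singleton]
  have h4 := Finset.card_le_card hsub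
  have h2 := hocc x
  omega

lemma occ_resolve (hocc : ∀ x : ℕ, ((Finset.univ : Finset (Fin m × Bool)).filter
      (fun p => (x, p.2) ∈ φ p.1)).card ≤ 2)
    {x : ℕ} {i j l : Fin m} {b : Bool}
    (h1 : (x, true) ∈ φ i) (h2 : (x, false) ∈ φ j) (h3 : (x, b) ∈ φ l) :
    (l = i ∧ b = true) ∨ (l = j ∧ b = false) := by
  by_contra hcon
  push_neg at hcon
  refine occ_three φ hocc (p := (l, b)) (q := (i, true)) (r := (j, false)) h3 h1 h2 ?_ ?_ (by simp)
  · intro h; rw [Prod.mk.injEq] at h; exact hcon.1 h.1 h.2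
  · intro h; rw [Prod.mk.injEq] at h; exact hcon.2 h.1 h.2

noncomputable def compF (i₀ : Fin m) : Finset (Fin m) :=
  Finset.univ.filter (fun j => ClauseReach m φ i₀ j)

lemma mem_compF {i₀ j : Fin m} : j ∈ compF φ i₀ ↔ j ∈ comp φ i₀ := by
  simp [compF, comp]

lemma coe_compF (i₀ : Fin m) : ((compF φ i₀ : Finset (Fin m)) : Set (Fin m)) = comp φ i₀ := by
  ext j; simp [mem_compF]

lemma ES_eq (i₀ : Fin m) :
    ES φ (comp φ i₀) = ↑((compF φ i₀).biUnion (Nv φ)) := by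
  ext x
  simp only [ES, Set.mem_setOf_eq, Finset.coe_biUnion, Set.mem_iUnion, Finset.mem_coe,
    mem_Nv, mem_compF]
  constructor
  · rintro ⟨i', j', hi', h1, h2⟩
    exact ⟨i', hi', true, h1, j', h2⟩
  · rintro ⟨i, hi, b, hb, j, hj⟩
    cases b
    · have hjK : j ∈ comp φ i₀ := mem_comp_step φ hi ⟨x, Or.inr ⟨hj, hb⟩⟩
      exact ⟨j, i, hjK, hj, hb⟩
    · exact ⟨i, j, hi, hb, hj⟩

lemma ES_finite (K : Set (Fin m)) : (ES φ K).Finite := by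
  apply Set.Finite.subset (Finset.univ.biUnion (fun i => (φ i).image Prod.fst)).finite_toSet
  rintro x ⟨i', j', _, h1, _⟩
  simp only [Finset.coe_biUnion, Set.mem_iUnion, Finset.mem_coe, Finset.mem_image]
  exact ⟨i', Finset.mem_univ _, ⟨(x, true), h1, rfl⟩⟩


def stepN : ℕ → Fin m → Fin m → Prop
  | 0, i, j => i = j
  | n+1, i, j => ∃ j', stepN n i j' ∧ stepR φ j' j

lemma reach_iff_stepN {i j : Fin m} :
    ClauseReach m φ i j ↔ ∃ n, stepN φ n i j := by
  constructor
  · intro h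
    induction h with
    | refl => exact ⟨0, rfl⟩
    | tail h1 h2 ih =>
      obtain ⟨n, hn⟩ := ih
      exact ⟨n + 1, _, hn, h2⟩
  · rintro ⟨n, hn⟩
    induction n generalizing j with
    | zero => cases hn; exact Relation.ReflTransGen.refl
    | succ n ih =>
      obtain ⟨j', h1, h2⟩ := hn
      exact Relation.ReflTransGen.tail (ih h1) h2

lemma comp_card (hocc : ∀ x : ℕ, ((Finset.univ : Finset (Fin m × Bool)).filter
      (fun p => (x, p.2) ∈ φ p.1)).card ≤ 2) (i₀ : Fin m) :
    (comp φ i₀).ncard ≤ (ES φ (comp φ i₀)).ncard + 1 := by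
  classical
  have hdist : ∀ j, j ∈ comp φ i₀ → ∃ n, stepN φ n i₀ j :=
    fun j hj => (reach_iff_stepN φ).mp hj
  set d : Fin m → ℕ := fun j => if h : j ∈ comp φ i₀ then Nat.find (hdist j h) else 0 with hd
  have key : ∀ j, j ∈ comp φ i₀ \ {i₀} → ∃ x p, p ∈ comp φ i₀ ∧ d p < d j ∧
      (((x, true) ∈ φ p ∧ (x, false) ∈ φ j) ∨ ((x, true) ∈ φ j ∧ (x, false) ∈ φ p)) ∧
      x ∈ ES φ (comp φ i₀) := by
    rintro j ⟨hjK, hji⟩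
    simp only [Set.mem_singleton_iff] at hji
    have hdj : d j = Nat.find (hdist j hjK) := dif_pos hjK
    have hspec : stepN φ (Nat.find (hdist j hjK)) i₀ j := Nat.find_spec (hdist j hjK)
    have hpos : Nat.find (hdist j hjK) ≠ 0 := by
      intro h0
      rw [h0] at hspec
      have : i₀ = j := hspec
      exact hji this.symm
    obtain ⟨n, hn⟩ : ∃ n, Nat.find (hdist j hjK) = n + 1 :=
      ⟨_, (Nat.succ_pred_eq_of_pos (Nat.pos_of_ne_zero hpos)).symm⟩
    rw [hn] at hspec
    obtain ⟨p, hp1, hp2⟩ := hspec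
    have hpK : p ∈ comp φ i₀ := (reach_iff_stepN φ).mpr ⟨n, hp1⟩
    have hdp : d p ≤ n := by
      rw [hd]; simp only []
      rw [dif_pos hpK]
      exact Nat.find_le hp1
    obtain ⟨x, hx⟩ := hp2
    refine ⟨x, p, hpK, by omega, hx, ?_⟩
    rcases hx with ⟨h1, h2⟩ | ⟨h1, h2⟩
    · exact ⟨p, j, hpK, h1, h2⟩
    · exact ⟨j, p, hjK, h1, h2⟩
  choose! g pf hpK hdp hlit hES using key
  have hinj : Set.InjOn g (comp φ i₀ \ {i₀}) := by
    rintro j1 hj1 j2 hj2 hgeq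
    by_contra hne12
    have hd1 := hdp j1 hj1
    have hd2 := hdp j2 hj2
    have u1 : ∃ a b : Fin m, (g j1, true) ∈ φ a ∧ (g j1, false) ∈ φ b ∧
        ((a = pf j1 ∧ b = j1) ∨ (a = j1 ∧ b = pf j1)) := by
      rcases hlit j1 hj1 with ⟨h1, h2⟩ | ⟨h1, h2⟩
      · exact ⟨_, _, h1, h2, Or.inl ⟨rfl, rfl⟩⟩
      · exact ⟨_, _, h1, h2, Or.inr ⟨rfl, rfl⟩⟩
    have u2 : ∃ a b : Fin m, (g j1, true) ∈ φ a ∧ (g j1, false) ∈ φ b ∧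
        ((a = pf j2 ∧ b = j2) ∨ (a = j2 ∧ b = pf j2)) := by
      rw [hgeq]
      rcases hlit j2 hj2 with ⟨h1, h2⟩ | ⟨h1, h2⟩
      · exact ⟨_, _, h1, h2, Or.inl ⟨rfl, rfl⟩⟩
      · exact ⟨_, _, h1, h2, Or.inr ⟨rfl, rfl⟩⟩
    obtain ⟨a1, b1, ha1, hb1, hab1⟩ := u1
    obtain ⟨a2, b2, ha2, hb2, hab2⟩ := u2
    have e1 : a2 = a1 := by
      rcases occ_resolve φ hocc ha1 hb1 ha2 with ⟨h, _⟩ | ⟨_, h⟩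
      · exact h
      · cases h
    have e2 : b2 = b1 := by
      rcases occ_resolve φ hocc ha1 hb1 hb2 with ⟨_, h⟩ | ⟨h, _⟩
      · cases h
      · exact h
    subst e1; subst e2
    rcases hab1 with ⟨hA1, hB1⟩ | ⟨hA1, hB1⟩ <;>
      rcases hab2 with ⟨hA2, hB2⟩ | ⟨hA2, hB2⟩
    · exact hne12 (hB1.symm.trans hB2)
    · -- a2 = pf j1 = j2, b2 = j1 = pf j2
      have e3 : j2 = pf j1 := hA2.symm.trans hA1
      have e4 : j1 = pf j2 := hB1.symm.trans hB2
      have c3 : d j2 = d (pf j1) := congrArg d e3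
      have c4 : d j1 = d (pf j2) := congrArg d e4
      have hlt : d j1 < d j1 := by
        calc d j1 = d (pf j2) := c4
        _ < d j2 := hd2
        _ = d (pf j1) := c3
        _ < d j1 := hd1
      exact lt_irrefl _ hlt
    · have e3 : j2 = pf j1 := hB2.symm.trans hB1
      have e4 : j1 = pf j2 := hA1.symm.trans hA2
      have c3 : d j2 = d (pf j1) := congrArg d e3
      have c4 : d j1 = d (pf j2) := congrArg d e4
      have hlt : d j1 < d j1 := by
        calc d j1 = d (pf j2) := c4
        _ < d j2 := hd2
        _ = d (pf j1) := c3
        _ < d j1 := hd1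
      exact lt_irrefl _ hlt
    · exact hne12 (hA1.symm.trans hA2)
  have h1 : (comp φ i₀ \ {i₀}).ncard ≤ (ES φ (comp φ i₀)).ncard :=
    Set.ncard_le_ncard_of_injOn g (fun a ha => hES a ha) hinj (ES_finite φ _)
  have h2 : (comp φ i₀ \ {i₀}).ncard + 1 = (comp φ i₀).ncard :=
    Set.ncard_diff_singleton_add_one (mem_comp_self φ i₀) (Set.toFinite _)
  omega

lemma exists_unsat (hocc : ∀ x : ℕ, ((Finset.univ : Finset (Fin m × Bool)).filter
      (fun p => (x, p.2) ∈ φ p.1)).card ≤ 2) (β : ℕ → Bool) (i₀ : Fin m)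
    (huntag : ∀ j ∈ comp φ i₀, ¬ Tagged m φ j)
    (htree : (ES φ (comp φ i₀)).ncard + 1 = (comp φ i₀).ncard) :
    ∃ j ∈ comp φ i₀, ¬ ∃ l ∈ φ j, β l.1 = l.2 := by
  by_contra hcon
  push_neg at hcon
  have hall : ∀ j, j ∈ comp φ i₀ → ∃ l : ℕ × Bool, l ∈ φ j ∧ β l.1 = l.2 := by
    intro j hj
    obtain ⟨l, hl1, hl2⟩ := hcon j hj
    exact ⟨l, hl1, hl2⟩
  choose! lf hmem hsat using hall
  have hcompl : ∀ j, j ∈ comp φ i₀ → ∃ j', ((lf j).1, !(lf j).2) ∈ φ j' := by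
    intro j hj
    have hnt := huntag j hj
    rw [Tagged] at hnt
    push_neg at hnt
    obtain ⟨j', hj'⟩ := hnt (lf j) (hmem j hj)
    exact ⟨j', hj'⟩
  have hmaps : ∀ j, j ∈ comp φ i₀ → (lf j).1 ∈ ES φ (comp φ i₀) := by
    intro j hj
    obtain ⟨j', hj'⟩ := hcompl j hj
    have hm : ((lf j).1, (lf j).2) ∈ φ j := by
      have := hmem j hj; rwa [← Prod.mk.eta (p := lf j)] at this
    rcases Bool.eq_false_or_eq_true (lf j).2 with h2 | h2
    · rw [h2] at hm hj'
      simp only [Bool.not_true] at hj'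
      exact ⟨j, j', hj, hm, hj'⟩
    · rw [h2] at hm hj'
      simp only [Bool.not_false] at hj'
      have hstep : stepR φ j j' := ⟨(lf j).1, Or.inr ⟨hj', hm⟩⟩
      exact ⟨j', j, mem_comp_step φ hj hstep, hj', hm⟩
  have hinj : Set.InjOn (fun j => (lf j).1) (comp φ i₀) := by
    intro j1 hj1 j2 hj2 heq
    by_contra hne12
    simp only [] at heq
    have hb1 : β (lf j1).1 = (lf j1).2 := hsat j1 hj1
    have hb2 : β (lf j2).1 = (lf j2).2 := hsat j2 hj2
    rw [← heq] at hb2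
    have hbeq : (lf j1).2 = (lf j2).2 := hb1.symm.trans hb2
    obtain ⟨j', hj'⟩ := hcompl j1 hj1
    have hm1 : ((lf j1).1, (lf j1).2) ∈ φ j1 := by
      have := hmem j1 hj1; rwa [← Prod.mk.eta (p := lf j1)] at this
    have hm2 : ((lf j1).1, (lf j1).2) ∈ φ j2 := by
      have := hmem j2 hj2; rw [← Prod.mk.eta (p := lf j2)] at this
      rwa [← heq, ← hbeq] at this
    refine occ_three φ hocc (p := (j1, (lf j1).2)) (q := (j2, (lf j1).2))
      (r := (j', !(lf j1).2)) hm1 hm2 hj' ?_ ?_ ?_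
    · intro h; rw [Prod.mk.injEq] at h; exact hne12 h.1
    · intro h; rw [Prod.mk.injEq] at h; exact (Bool.not_ne_self _ h.2.symm ..).elim
    · intro h; rw [Prod.mk.injEq] at h; exact (Bool.not_ne_self _ h.2.symm ..).elim
  have h1 : (comp φ i₀).ncard ≤ (ES φ (comp φ i₀)).ncard :=
    Set.ncard_le_ncard_of_injOn _ hmaps hinj (ES_finite φ _)
  omega


lemma hall_cond (hocc : ∀ x : ℕ, ((Finset.univ : Finset (Fin m × Bool)).filter
      (fun p => (x, p.2) ∈ φ p.1)).card ≤ 2)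
    (SacS : Set (Fin m))
    (hbad : ∀ K ∈ Bad φ, ∃ s ∈ K, s ∈ SacS) :
    ∀ S : Finset (Fin m), (∀ i ∈ S, ¬ Tagged m φ i ∧ i ∉ SacS) →
      S.card ≤ (S.biUnion (Nv φ)).card := by
  classical
  intro S
  induction S using Finset.strongInduction with
  | _ S ih =>
    intro hSV
    rcases S.eq_empty_or_nonempty with rfl | ⟨i₀, hi₀⟩
    · simp
    by_cases hA : ∃ x ∈ S.biUnion (Nv φ), ∃ i ∈ S, ∀ i' ∈ S, (∃ b, (x, b) ∈ φ i') → i' = i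
    · obtain ⟨x, hx, i, hiS, huniq⟩ := hA
      have hsub : (S.erase i).biUnion (Nv φ) ⊆ (S.biUnion (Nv φ)).erase x := by
        intro y hy
        rw [Finset.mem_biUnion] at hy
        obtain ⟨i', hi', hyNv⟩ := hy
        rw [Finset.mem_erase] at hi'
        rw [Finset.mem_erase]
        refine ⟨?_, Finset.mem_biUnion.mpr ⟨i', hi'.2, hyNv⟩⟩
        rintro rfl
        obtain ⟨b, hb, _⟩ := (mem_Nv φ).mp hyNv
        exact hi'.1 (huniq i' hi'.2 ⟨b, hb⟩)
      have h1 := ih (S.erase i) (Finset.erase_ssubset hiS)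
        (fun j hj => hSV j (Finset.mem_of_mem_erase hj))
      have h2 := Finset.card_le_card hsub
      have h3 : ((S.biUnion (Nv φ)).erase x).card + 1 = (S.biUnion (Nv φ)).card :=
        Finset.card_erase_add_one hx
      have h4 : (S.erase i).card + 1 = S.card := Finset.card_erase_add_one hiS
      omega
    · push_neg at hA
      have hclosed : ∀ j, ClauseReach m φ i₀ j → j ∈ S := by
        intro j hj
        induction hj with
        | refl => exact hi₀
        | @tail b c hr hstep ihj =>
          obtain ⟨x, hx⟩ := hstep
          have hxNv : x ∈ Nv φ b := by
            rcases hx with ⟨h1, h2⟩ | ⟨h1, h2⟩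
            · exact (mem_Nv φ).mpr ⟨true, h1, c, h2⟩
            · exact (mem_Nv φ).mpr ⟨false, h2, c, by simpa using h1⟩
          have hxU : x ∈ S.biUnion (Nv φ) := Finset.mem_biUnion.mpr ⟨b, ihj, hxNv⟩
          obtain ⟨i', hi'S, ⟨b', hb'⟩, hi'ne⟩ := hA x hxU b ihj
          rcases hx with ⟨h1, h2⟩ | ⟨h1, h2⟩
          · rcases occ_resolve φ hocc h1 h2 hb' with ⟨rfl, _⟩ | ⟨rfl, _⟩
            · exact absurd rfl hi'ne
            · exact hi'S
          · rcases occ_resolve φ hocc h1 h2 hb' with ⟨rfl, _⟩ | ⟨rfl, _⟩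
            · exact hi'S
            · exact absurd rfl hi'ne
      have hKS : compF φ i₀ ⊆ S := fun j hj => hclosed j ((mem_compF φ).mp hj)
      have hKuntag : ∀ j ∈ comp φ i₀, ¬ Tagged m φ j :=
        fun j hj => (hSV j (hKS ((mem_compF φ).mpr hj))).1
      have hnotbad : (ES φ (comp φ i₀)).ncard + 1 ≠ (comp φ i₀).ncard := by
        intro heq
        obtain ⟨s, hsK, hsS⟩ := hbad (comp φ i₀) ⟨i₀, rfl, hKuntag, heq⟩
        exact (hSV s (hKS ((mem_compF φ).mpr hsK))).2 hsS
      have hcc := comp_card φ hocc i₀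
      have hc1 : (comp φ i₀).ncard = (compF φ i₀).card := by
        rw [← coe_compF φ i₀, Set.ncard_coe_finset]
      have hc2 : (ES φ (comp φ i₀)).ncard = ((compF φ i₀).biUnion (Nv φ)).card := by
        rw [ES_eq φ i₀, Set.ncard_coe_finset]
      have hdisj : Disjoint ((compF φ i₀).biUnion (Nv φ)) ((S \ compF φ i₀).biUnion (Nv φ)) := by
        rw [Finset.disjoint_left]
        intro x hx1 hx2
        rw [Finset.mem_biUnion] at hx1 hx2
        obtain ⟨j, hjK, hxj⟩ := hx1
        obtain ⟨i', hi', hxi'⟩ := hx2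
        rw [Finset.mem_sdiff] at hi'
        obtain ⟨b, hb, j₂, hj₂⟩ := (mem_Nv φ).mp hxj
        obtain ⟨b', hb', _⟩ := (mem_Nv φ).mp hxi'
        have hjc : j ∈ comp φ i₀ := (mem_compF φ).mp hjK
        cases b
        · -- b = false : (x,false) ∈ φ j, (x,true) ∈ φ j₂
          simp only [Bool.not_false] at hj₂
          have hj₂K : j₂ ∈ comp φ i₀ := mem_comp_step φ hjc ⟨x, Or.inr ⟨hj₂, hb⟩⟩
          rcases occ_resolve φ hocc hj₂ hb hb' with ⟨rfl, _⟩ | ⟨rfl, _⟩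
          · exact hi'.2 ((mem_compF φ).mpr hj₂K)
          · exact hi'.2 ((mem_compF φ).mpr hjc)
        · -- b = true
          simp only [Bool.not_true] at hj₂
          have hj₂K : j₂ ∈ comp φ i₀ := mem_comp_step φ hjc ⟨x, Or.inl ⟨hb, hj₂⟩⟩
          rcases occ_resolve φ hocc hb hj₂ hb' with ⟨rfl, _⟩ | ⟨rfl, _⟩
          · exact hi'.2 ((mem_compF φ).mpr hjc)
          · exact hi'.2 ((mem_compF φ).mpr hj₂K)
      have hunion : compF φ i₀ ∪ (S \ compF φ i₀) = S := Finset.union_sdiff_of_subset hKS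
      have hbiu : S.biUnion (Nv φ) =
          (compF φ i₀).biUnion (Nv φ) ∪ (S \ compF φ i₀).biUnion (Nv φ) := by
        ext x
        simp only [Finset.mem_union, Finset.mem_biUnion, Finset.mem_sdiff]
        constructor
        · rintro ⟨i, hi, hx⟩
          by_cases h : i ∈ compF φ i₀
          · exact Or.inl ⟨i, h, hx⟩
          · exact Or.inr ⟨i, ⟨hi, h⟩, hx⟩
        · rintro (⟨i, hi, hx⟩ | ⟨i, hi, hx⟩)
          · exact ⟨i, hKS hi, hx⟩
          · exact ⟨i, hi.1, hx⟩
      have hcard_biu : (S.biUnion (Nv φ)).card =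
          ((compF φ i₀).biUnion (Nv φ)).card + ((S \ compF φ i₀).biUnion (Nv φ)).card := by
        rw [hbiu]
        exact Finset.card_union_of_disjoint hdisj
      have hKne : i₀ ∈ compF φ i₀ := (mem_compF φ).mpr (mem_comp_self φ i₀)
      have hssub : S \ compF φ i₀ ⊂ S := by
        refine Finset.sdiff_ssubset hKS ⟨i₀, hKne⟩
      have hIH := ih (S \ compF φ i₀) hssub (fun j hj => hSV j (Finset.mem_sdiff.mp hj).1)
      have hdisj2 : Disjoint (compF φ i₀) (S \ compF φ i₀) := Finset.disjoint_sdiff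
      have hcardS : S.card = (compF φ i₀).card + (S \ compF φ i₀).card := by
        have h := Finset.card_union_of_disjoint hdisj2
        rw [hunion] at h
        exact h
      omega

end CNF2Aux

/-- Let `φ` be a CNF(2) formula (no empty clauses, every variable has
at most two occurrences in total) with `m` clauses, and let `k` be the number of
connected components of the multigraph `G(φ)` (vertices: clauses; one edge per
variable occurring both positively and negatively) that are trees (#edges =
#vertices − 1) containing no tagged clause.  Then the maximum number of clauses
simultaneously satisfiable is exactly `m − k`. -/
theorem cnf2_maxsat (m : ℕ) (φ : Fin m → Finset (ℕ × Bool))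
    (hne : ∀ i, φ i ≠ ∅)
    (hocc : ∀ x : ℕ,
      ((Finset.univ : Finset (Fin m × Bool)).filter
        (fun p => (x, p.2) ∈ φ p.1)).card ≤ 2)
    (k : ℕ)
    (hk : k = Set.ncard {K : Set (Fin m) | ∃ i : Fin m,
        K = {j | ClauseReach m φ i j} ∧
        (∀ j ∈ K, ¬ Tagged m φ j) ∧
        Set.ncard {x : ℕ | ∃ i' j' : Fin m,
            i' ∈ K ∧ (x, true) ∈ φ i' ∧ (x, false) ∈ φ j'} + 1 =
          Set.ncard K}) :
    (∃ β : ℕ → Bool,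
      (Finset.univ.filter (fun i => ∃ l ∈ φ i, β l.1 = l.2)).card = m - k) ∧
    (∀ β : ℕ → Bool,
      (Finset.univ.filter (fun i => ∃ l ∈ φ i, β l.1 = l.2)).card ≤ m - k) := by
  classical
  have hkB : k = (CNF2Aux.Bad φ).ncard := hk
  rcases Nat.eq_zero_or_pos m with hm0 | hm
  · subst hm0
    have hB : (CNF2Aux.Bad φ) = ∅ := by
      ext K
      simp only [CNF2Aux.Bad, Set.mem_setOf_eq, Set.mem_empty_iff_false, iff_false,
        not_exists]
      intro i
      exact i.elim0
    have hk0 : k = 0 := by rw [hkB, hB, Set.ncard_empty]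
    subst hk0
    constructor
    · exact ⟨fun _ => true, by simp⟩
    · intro β; simp
  haveI : Inhabited (Fin m) := ⟨⟨0, hm⟩⟩
  -- upper bound
  have hupper : ∀ β : ℕ → Bool,
      (Finset.univ.filter (fun i => ∃ l ∈ φ i, β l.1 = l.2)).card ≤ m - k := by
    intro β
    have hpart : (Finset.univ.filter (fun i => ∃ l ∈ φ i, β l.1 = l.2)).card
        + (Finset.univ.filter (fun i => ¬ ∃ l ∈ φ i, β l.1 = l.2)).card = m := by
      rw [Finset.card_filter_add_card_filter_not]
      simp
    have hBU : ∀ K, K ∈ CNF2Aux.Bad φ → ∃ j, j ∈ K ∧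
        j ∈ Finset.univ.filter (fun i => ¬ ∃ l ∈ φ i, β l.1 = l.2) := by
      rintro K ⟨i, rfl, huntag, htree⟩
      obtain ⟨j, hjK, hjU⟩ := CNF2Aux.exists_unsat φ hocc β i huntag htree
      exact ⟨j, hjK, Finset.mem_filter.mpr ⟨Finset.mem_univ _, hjU⟩⟩
    choose! u hu1 hu2 using hBU
    have hinj : Set.InjOn u (CNF2Aux.Bad φ) := by
      intro K1 hK1 K2 hK2 hue
      obtain ⟨i1, hKe1, -, -⟩ := id hK1
      obtain ⟨i2, hKe2, -, -⟩ := id hK2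
      have h1 : K1 = CNF2Aux.comp φ (u K1) := by
        rw [hKe1]
        exact CNF2Aux.comp_eq_of_mem φ (by rw [← hKe1]; exact hu1 K1 hK1)
      have h2 : K2 = CNF2Aux.comp φ (u K2) := by
        rw [hKe2]
        exact CNF2Aux.comp_eq_of_mem φ (by rw [← hKe2]; exact hu1 K2 hK2)
      rw [h1, h2, hue]
    have hcard : (CNF2Aux.Bad φ).ncard ≤
        (Finset.univ.filter (fun i => ¬ ∃ l ∈ φ i, β l.1 = l.2)).card := by
      have h := Set.ncard_le_ncard_of_injOn u
        (fun K hK => Finset.mem_coe.mpr (hu2 K hK)) hinj (Finset.finite_toSet _)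
      rwa [Set.ncard_coe_finset] at h
    omega
  refine ⟨?_, hupper⟩
  -- sacrifices
  have hBne : ∀ K ∈ CNF2Aux.Bad φ, K.Nonempty := by
    rintro K ⟨i, rfl, -, -⟩
    exact ⟨i, CNF2Aux.mem_comp_self φ i⟩
  set sc : Set (Fin m) → Fin m := fun K => if h : K.Nonempty then h.choose else ⟨0, hm⟩
    with hscdef
  set SacS : Set (Fin m) := sc '' (CNF2Aux.Bad φ) with hSacS
  have hsc : ∀ K ∈ CNF2Aux.Bad φ, sc K ∈ K := by
    intro K hK
    have h := hBne K hK
    simp only [hscdef, dif_pos h]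
    exact h.choose_spec
  have hbadsac : ∀ K ∈ CNF2Aux.Bad φ, ∃ s ∈ K, s ∈ SacS :=
    fun K hK => ⟨sc K, hsc K hK, ⟨K, hK, rfl⟩⟩
  have hSacCard : SacS.ncard ≤ k := by
    rw [hkB, hSacS]
    exact Set.ncard_image_le (Set.toFinite _)
  have hhall := CNF2Aux.hall_cond φ hocc SacS hbadsac
  have hcond : ∀ s : Finset {i : Fin m // ¬ Tagged m φ i ∧ i ∉ SacS},
      s.card ≤ (s.biUnion (fun p => CNF2Aux.Nv φ p.1)).card := by
    intro s
    have himg : (s.image Subtype.val).card = s.card :=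
      Finset.card_image_of_injective _ Subtype.val_injective
    have hbiu : s.biUnion (fun p => CNF2Aux.Nv φ p.1)
        = (s.image Subtype.val).biUnion (CNF2Aux.Nv φ) := by
      ext x
      simp only [Finset.mem_biUnion, Finset.mem_image]
      constructor
      · rintro ⟨p, hp, hx⟩; exact ⟨p.1, ⟨p, hp, rfl⟩, hx⟩
      · rintro ⟨i, ⟨p, hp, rfl⟩, hx⟩; exact ⟨p, hp, hx⟩
    rw [hbiu, ← himg]
    refine hhall _ ?_
    intro i hi
    rw [Finset.mem_image] at hi
    obtain ⟨p, -, rfl⟩ := hi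
    exact p.2
  obtain ⟨f, hfinj, hfmem⟩ :=
    (Finset.all_card_le_biUnion_card_iff_exists_injective
      (fun p : {i : Fin m // ¬ Tagged m φ i ∧ i ∉ SacS} => CNF2Aux.Nv φ p.1)).mp hcond
  have hfN : ∀ p : {i : Fin m // ¬ Tagged m φ i ∧ i ∉ SacS},
      ∃ b, (f p, b) ∈ φ p.1 ∧ ∃ j, (f p, !b) ∈ φ j :=
    fun p => (CNF2Aux.mem_Nv φ).mp (hfmem p)
  choose bf hbf1 hbf2 using hfN
  set β : ℕ → Bool := fun x =>
    if h : ∃ p, f p = x then bf h.choose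
    else if ∃ j : Fin m, (x, true) ∈ φ j then true else false with hβ
  refine ⟨β, ?_⟩
  have hsatV : ∀ i, ∀ hi : ¬ Tagged m φ i ∧ i ∉ SacS, ∃ l ∈ φ i, β l.1 = l.2 := by
    intro i hi
    refine ⟨(f ⟨i, hi⟩, bf ⟨i, hi⟩), hbf1 ⟨i, hi⟩, ?_⟩
    have hex : ∃ p, f p = f ⟨i, hi⟩ := ⟨⟨i, hi⟩, rfl⟩
    have hch : hex.choose = ⟨i, hi⟩ := hfinj hex.choose_spec
    show β (f ⟨i, hi⟩) = bf ⟨i, hi⟩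
    rw [hβ]
    simp only []
    rw [dif_pos hex, hch]
  have hsatT : ∀ i, Tagged m φ i → ∃ l ∈ φ i, β l.1 = l.2 := by
    rintro i ⟨l, hl, hpure⟩
    refine ⟨l, hl, ?_⟩
    have hnof : ¬ ∃ p, f p = l.1 := by
      rintro ⟨p, hp⟩
      obtain ⟨j, hj⟩ := hbf2 p
      have h1 : (l.1, bf p) ∈ φ p.1 := hp ▸ hbf1 p
      have h2 : (l.1, !bf p) ∈ φ j := hp ▸ hj
      by_cases hb : bf p = l.2
      · refine hpure j ?_
        rw [← hb]
        exact h2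
      · have hb' : bf p = !l.2 := by
          cases hbp : bf p <;> cases hl2 : l.2 <;> simp [hbp, hl2] at hb ⊢
        refine hpure p.1 ?_
        rw [← hb']
        exact h1
    show β l.1 = l.2
    rw [hβ]
    simp only []
    rw [dif_neg hnof]
    rcases Bool.eq_false_or_eq_true l.2 with h2 | h2
    · have hcondT : ∃ j : Fin m, (l.1, true) ∈ φ j := by
        refine ⟨i, ?_⟩
        rw [← h2]
        rwa [Prod.mk.eta]
      rw [if_pos hcondT, h2]
    · have hcondF : ¬ ∃ j : Fin m, (l.1, true) ∈ φ j := by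
        rintro ⟨j, hj⟩
        have := hpure j
        rw [h2] at this
        simp only [Bool.not_false] at this
        exact this hj
      rw [if_neg hcondF, h2]
  have hUsub : ∀ i : Fin m, ¬ (∃ l ∈ φ i, β l.1 = l.2) → i ∈ SacS := by
    intro i hi
    by_contra hnS
    by_cases ht : Tagged m φ i
    · exact hi (hsatT i ht)
    · exact hi (hsatV i ⟨ht, hnS⟩)
  have hpart : (Finset.univ.filter (fun i => ∃ l ∈ φ i, β l.1 = l.2)).card
      + (Finset.univ.filter (fun i => ¬ ∃ l ∈ φ i, β l.1 = l.2)).card = m := by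
    rw [Finset.card_filter_add_card_filter_not]
    simp
  have hUcard : (Finset.univ.filter (fun i => ¬ ∃ l ∈ φ i, β l.1 = l.2)).card
      ≤ SacS.ncard := by
    have hsub : ((Finset.univ.filter (fun i => ¬ ∃ l ∈ φ i, β l.1 = l.2)) : Set (Fin m))
        ⊆ SacS := by
      intro i hi
      rw [Finset.mem_coe, Finset.mem_filter] at hi
      exact hUsub i hi.2
    have h := Set.ncard_le_ncard hsub (Set.toFinite _)
    rwa [Set.ncard_coe_finset] at h
  have hup := hupper β
  omega
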